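/- Assume (H2): ±i are simple eigenvalues of A, i.e. dim 𝒩(i−A_c) = 1 = codim ℛ(i−A_c) and every nonzero ψ ∈ 𝒩(i−A_c) satisfies ψ ∉ ℛ(i−A_c). Let P ∈ ℒ(V_c) be the projection onto V⋆ along V♯ given by the decomposition V_c = V⋆ ⊕ V♯. Then P A_c ⊆ A_c P (i.e. if φ ∈ 𝒟(A_c) then Pφ ∈ 𝒟(A_c) and P A_c φ = A_c P φ); consequently A_c decomposes as A_c = A⋆ ⊕ A♯ with respect to this splitting. -/

import Mathlib

open Real Filter Set Function MeasureTheory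
open scoped ENNReal

noncomputable section

namespace HopfStmt

/-- The sup part of the periodic Hölder norm. -/
def supN {E : Type*} [NormedAddCommGroup E] (u : ℝ → E) : ℝ := ⨆ t : ℝ, ‖u t‖

/-- The Hölder seminorm part. -/
def holS {E : Type*} [NormedAddCommGroup E] (β : ℝ) (u : ℝ → E) : ℝ :=
  ⨆ p : ℝ × ℝ, ‖u p.1 - u p.2‖ / |p.1 - p.2| ^ β

/-- The norm of `C^β_{2π}(ℝ, E)`. -/
def holderN {E : Type*} [NormedAddCommGroup E] (β : ℝ) (u : ℝ → E) : ℝ :=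
  supN u + holS β u

/-- Membership in `C^β_{2π}(ℝ, E)`: `2π`-periodic and `β`-Hölder continuous. -/
def MemHolder {E : Type*} [NormedAddCommGroup E] (β : ℝ) (u : ℝ → E) : Prop :=
  Function.Periodic u (2 * π) ∧ ∃ C : ℝ, ∀ s t : ℝ, ‖u s - u t‖ ≤ C * |s - t| ^ β

/-- Membership in the span of the first cosine and sine modes: `w = a ⊗ c₁ + b ⊗ s₁`. -/
def memSp1 {E : Type*} [AddCommGroup E] [Module ℝ E] (w : ℝ → E) : Prop :=
  ∃ a b : E, ∀ t : ℝ, w t = Real.cos t • a + Real.sin t • b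

/-- `L₁ ψ := Re (ψ ⊗ e₁)`, i.e. `(L₁ψ)(t) = cos t • ψ₁ - sin t • ψ₂` for `ψ = ψ₁ + iψ₂`. -/
def L1 {E : Type*} [AddCommGroup E] [Module ℝ E] (ψ : E × E) : ℝ → E :=
  fun t => Real.cos t • ψ.1 - Real.sin t • ψ.2

/-- Multiplication by the complex scalar `c` on the complexification `E_c = E × E`. -/
def csmul {E : Type*} [AddCommGroup E] [Module ℝ E] (c : ℂ) (x : E × E) : E × E :=
  (c.re • x.1 - c.im • x.2, c.im • x.1 + c.re • x.2)

/-- Complex conjugation on the complexification. -/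
def conjC {E : Type*} [AddCommGroup E] (x : E × E) : E × E := (x.1, -x.2)

variable {V : Type*} [NormedAddCommGroup V] [NormedSpace ℝ V]
variable {U : Type*} [NormedAddCommGroup U] [NormedSpace ℝ U]

/-- The complexified inclusion `ι_c : U_c → V_c`. -/
def iotaC (ι : U →L[ℝ] V) (ψ : U × U) : V × V := (ι ψ.1, ι ψ.2)

/-- The complexified operator `A_c : U_c → V_c`. -/
def AcC (A : U →L[ℝ] V) (ψ : U × U) : V × V := (A ψ.1, A ψ.2)

/-- The operator `c - A_c : U_c → V_c` for a complex scalar `c`. -/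
def cMinusA (ι A : U →L[ℝ] V) (c : ℂ) (ψ : U × U) : V × V :=
  csmul c (iotaC ι ψ) - AcC A ψ

/-- The kernel `𝒩(i - A_c) ⊆ U_c`. -/
def kerIA (ι A : U →L[ℝ] V) : Set (U × U) := {ψ | cMinusA ι A Complex.I ψ = 0}

/-- The range `ℛ(i - A_c) ⊆ V_c`. -/
def ranIA (ι A : U →L[ℝ] V) : Set (V × V) := Set.range (cMinusA ι A Complex.I)

/-- `V♯ := ℛ(i - A_c) ∩ ℛ(-i - A_c)`. -/
def Vsharp (ι A : U →L[ℝ] V) : Set (V × V) :=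
  Set.range (cMinusA ι A Complex.I) ∩ Set.range (cMinusA ι A (-Complex.I))

/-- The `V`-valued time derivative of `w : ℝ → U` (through the inclusion `ι`). -/
def Xder (ι : U →L[ℝ] V) (w : ℝ → U) : ℝ → V := fun t => deriv (fun s => ι (w s)) t

/-- Membership in `X := C^{1+β}_{2π}(ℝ,V) ∩ C^β_{2π}(ℝ,U)`. -/
def MemX (β : ℝ) (ι : U →L[ℝ] V) (w : ℝ → U) : Prop :=
  MemHolder β w ∧ (∀ t : ℝ, DifferentiableAt ℝ (fun s => ι (w s)) t) ∧
    MemHolder β (Xder ι w)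

/-- The norm of `X`: `‖w‖_X = ‖w‖_{V,1+β} + ‖w‖_{U,β}`. -/
def normX (β : ℝ) (ι : U →L[ℝ] V) (w : ℝ → U) : ℝ :=
  (holderN β (fun t => ι (w t)) + holderN β (Xder ι w)) + holderN β w

/-- `T₁ w := ẇ - A w`. -/
def T1op (ι A : U →L[ℝ] V) (w : ℝ → U) : ℝ → V := fun t => Xder ι w t - A (w t)

/-- Hypothesis (H2): `±i` are simple eigenvalues of `A`, i.e.
`dim 𝒩(i - A_c) = 1 = codim ℛ(i - A_c)` and nonzero kernel elements do not lie in the range. -/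
def H2hyp (ι A : U →L[ℝ] V) : Prop :=
  (∃ ψ ∈ kerIA ι A, ψ ≠ 0 ∧ ∀ φ ∈ kerIA ι A, ∃ c : ℂ, φ = csmul c ψ) ∧
  (∃ χ : V × V, χ ∉ ranIA ι A ∧ ∀ v : V × V, ∃ c : ℂ, ∃ r ∈ ranIA ι A, v = r + csmul c χ) ∧
  (∀ ψ ∈ kerIA ι A, ψ ≠ 0 → iotaC ι ψ ∉ ranIA ι A)

/-- Hypothesis (H4): `ik ∈ ρ(A_c)` for `k ∈ ℤ \ {-1, 1}`. -/
def H4hyp (ι A : U →L[ℝ] V) : Prop :=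
  ∀ k : ℤ, k ≠ 1 → k ≠ -1 → Function.Bijective (cMinusA ι A (Complex.I * (k : ℂ)))

/-- Hypothesis (H5): `‖(in - A_c)⁻¹‖ ≤ M / n` for `n = 2, 3, 4, ...`. -/
def H5hyp (ι A : U →L[ℝ] V) : Prop :=
  ∃ M : ℝ, 0 < M ∧ ∀ n : ℕ, 2 ≤ n →
    ∀ ψ : U × U, (n : ℝ) * ‖iotaC ι ψ‖ ≤ M * ‖cMinusA ι A (Complex.I * (n : ℂ)) ψ‖

/-- Hypothesis (H3): the eigenvalue branch `μ(λ)` of `A_c + (h_u(λ,0))_c` through `μ(0) = i`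
satisfies the transversality condition `Re μ'(0) ≠ 0`. -/
def H3hyp (ι A : U →L[ℝ] V) (h : ℝ → U → V) : Prop :=
  ∃ (ε : ℝ) (μ : ℝ → ℂ) (ψb : ℝ → U × U) (μ' : ℂ), 0 < ε ∧
    μ 0 = Complex.I ∧ ψb 0 ∈ kerIA ι A ∧ ψb 0 ≠ 0 ∧
    ContinuousOn ψb (Metric.ball (0 : ℝ) ε) ∧
    (∀ lam ∈ Metric.ball (0 : ℝ) ε,
      AcC A (ψb lam) + (fderiv ℝ (h lam) 0 (ψb lam).1, fderiv ℝ (h lam) 0 (ψb lam).2)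
        = csmul (μ lam) (iotaC ι (ψb lam))) ∧
    HasDerivAt μ μ' 0 ∧ μ'.re ≠ 0

/-- Unbundled notion: `f : (E, NE) → (F, NF)` is of class `C²` on `D` (Fréchet sense). -/
def UFC2On {E F : Type*} [AddCommGroup E] [Module ℝ E] [AddCommGroup F] [Module ℝ F]
    (NE : E → ℝ) (NF : F → ℝ) (D : Set E) (f : E → F) : Prop :=
  ∃ (D1 : E → E → F) (D2 : E → E → E → F),
    (∀ x ∈ D, IsLinearMap ℝ (D1 x) ∧ ∃ C : ℝ, ∀ e, NF (D1 x e) ≤ C * NE e) ∧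
    (∀ x ∈ D, ∀ ε > (0 : ℝ), ∃ d > (0 : ℝ), ∀ y ∈ D, NE (y - x) < d →
      NF (f y - f x - D1 x (y - x)) ≤ ε * NE (y - x)) ∧
    (∀ x ∈ D, (∀ e, IsLinearMap ℝ (D2 x e)) ∧ (∀ e', IsLinearMap ℝ (fun e => D2 x e e')) ∧
      ∃ C : ℝ, ∀ e e', NF (D2 x e e') ≤ C * NE e * NE e') ∧
    (∀ x ∈ D, ∀ ε > (0 : ℝ), ∃ d > (0 : ℝ), ∀ y ∈ D, NE (y - x) < d →
      ∀ e, NF (D1 y e - D1 x e - D2 x (y - x) e) ≤ ε * NE (y - x) * NE e) ∧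
    (∀ x ∈ D, ∀ ε > (0 : ℝ), ∃ d > (0 : ℝ), ∀ y ∈ D, NE (y - x) < d →
      ∀ e e', NF (D2 y e e' - D2 x e e') ≤ ε * NE e * NE e')

/-- Unbundled notion: `f : ℝ → (E, NE)` is `C¹` on `s` with derivative `f'`. -/
def UC1On {E : Type*} [AddCommGroup E] [Module ℝ E] (NE : E → ℝ) (s : Set ℝ)
    (f f' : ℝ → E) : Prop :=
  (∀ a ∈ s, ∀ ε > (0 : ℝ), ∃ d > (0 : ℝ), ∀ b ∈ s, |b - a| < d →
    NE (f b - f a - (b - a) • f' a) ≤ ε * |b - a|) ∧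
  (∀ a ∈ s, ∀ ε > (0 : ℝ), ∃ d > (0 : ℝ), ∀ b ∈ s, |b - a| < d → NE (f' b - f' a) ≤ ε)


section AuxProj

variable {E : Type*} [AddCommGroup E] [Module ℝ E]

lemma csmul_csmul' (c d : ℂ) (x : E × E) :
    csmul c (csmul d x) = csmul (c * d) x := by
  simp only [csmul, Complex.mul_re, Complex.mul_im, Prod.ext_iff,
    smul_sub, smul_add, smul_smul, sub_smul, add_smul]
  constructor <;> module

lemma csmul_add' (c : ℂ) (x y : E × E) :
    csmul c (x + y) = csmul c x + csmul c y := by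
  simp only [csmul, Prod.ext_iff, Prod.fst_add, Prod.snd_add, smul_add]
  constructor <;> abel

lemma csmul_sub' (c : ℂ) (x y : E × E) :
    csmul c (x - y) = csmul c x - csmul c y := by
  simp only [csmul, Prod.ext_iff, Prod.fst_sub, Prod.snd_sub, smul_sub]
  constructor <;> abel

lemma csmul_sub_csmul (c d : ℂ) (x : E × E) :
    csmul c x - csmul d x = csmul (c - d) x := by
  simp only [csmul, Prod.ext_iff, Prod.fst_sub, Prod.snd_sub,
    Complex.sub_re, Complex.sub_im, sub_smul]
  constructor <;> abel

lemma csmul_one' (x : E × E) : csmul (1 : ℂ) x = x := by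
  simp [csmul]

lemma csmul_zero' (x : E × E) : csmul (0 : ℂ) x = 0 := by
  simp [csmul, Prod.ext_iff]

lemma conjC_csmul (c : ℂ) (x : E × E) :
    conjC (csmul c x) = csmul ((starRingEnd ℂ) c) (conjC x) := by
  simp only [conjC, csmul, Prod.ext_iff, Complex.conj_re, Complex.conj_im,
    neg_smul, smul_neg]
  constructor <;> abel

lemma conjC_conjC (x : E × E) : conjC (conjC x) = x := by
  simp [conjC]

end AuxProj

section AuxProj2

variable {V : Type*} [NormedAddCommGroup V] [NormedSpace ℝ V]
variable {U : Type*} [NormedAddCommGroup U] [NormedSpace ℝ U]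

lemma iotaC_csmul (ι : U →L[ℝ] V) (c : ℂ) (ψ : U × U) :
    iotaC ι (csmul c ψ) = csmul c (iotaC ι ψ) := by
  simp [iotaC, csmul, map_sub, map_add, _root_.map_smul]

lemma AcC_csmul (A : U →L[ℝ] V) (c : ℂ) (ψ : U × U) :
    AcC A (csmul c ψ) = csmul c (AcC A ψ) := by
  simp [AcC, csmul, map_sub, map_add, _root_.map_smul]

lemma iotaC_conjC (ι : U →L[ℝ] V) (ψ : U × U) :
    iotaC ι (conjC ψ) = conjC (iotaC ι ψ) := by
  simp [iotaC, conjC]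

lemma AcC_conjC (A : U →L[ℝ] V) (ψ : U × U) :
    AcC A (conjC ψ) = conjC (AcC A ψ) := by
  simp [AcC, conjC]

lemma iotaC_add (ι : U →L[ℝ] V) (ψ φ : U × U) :
    iotaC ι (ψ + φ) = iotaC ι ψ + iotaC ι φ := by
  simp [iotaC, Prod.ext_iff]

lemma iotaC_sub (ι : U →L[ℝ] V) (ψ φ : U × U) :
    iotaC ι (ψ - φ) = iotaC ι ψ - iotaC ι φ := by
  simp [iotaC, Prod.ext_iff]

lemma AcC_add (A : U →L[ℝ] V) (ψ φ : U × U) :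
    AcC A (ψ + φ) = AcC A ψ + AcC A φ := by
  simp [AcC, Prod.ext_iff]

lemma AcC_sub (A : U →L[ℝ] V) (ψ φ : U × U) :
    AcC A (ψ - φ) = AcC A ψ - AcC A φ := by
  simp [AcC, Prod.ext_iff]

lemma cMinusA_csmul (ι A : U →L[ℝ] V) (c d : ℂ) (ψ : U × U) :
    cMinusA ι A c (csmul d ψ) = csmul d (cMinusA ι A c ψ) := by
  unfold cMinusA
  rw [iotaC_csmul, AcC_csmul, csmul_csmul', csmul_sub', csmul_csmul',
    mul_comm c d]

lemma cMinusA_sub (ι A : U →L[ℝ] V) (c : ℂ) (ψ φ : U × U) :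
    cMinusA ι A c (ψ - φ) = cMinusA ι A c ψ - cMinusA ι A c φ := by
  unfold cMinusA
  rw [iotaC_sub, AcC_sub, csmul_sub']
  abel

lemma conjC_cMinusA (ι A : U →L[ℝ] V) (c : ℂ) (ψ : U × U) :
    conjC (cMinusA ι A c ψ) = cMinusA ι A ((starRingEnd ℂ) c) (conjC ψ) := by
  unfold cMinusA
  have : conjC (csmul c (iotaC ι ψ) - AcC A ψ)
      = conjC (csmul c (iotaC ι ψ)) - conjC (AcC A ψ) := by
    simp only [conjC, Prod.ext_iff, Prod.fst_sub, Prod.snd_sub, neg_sub]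
    exact ⟨trivial, by abel⟩
  rw [this, conjC_csmul, iotaC_conjC, AcC_conjC]

lemma range_sub_mem (ι A : U →L[ℝ] V) (c : ℂ) {x y : V × V}
    (hx : x ∈ Set.range (cMinusA ι A c)) (hy : y ∈ Set.range (cMinusA ι A c)) :
    x - y ∈ Set.range (cMinusA ι A c) := by
  obtain ⟨a, ha⟩ := hx
  obtain ⟨b, hb⟩ := hy
  exact ⟨a - b, by rw [cMinusA_sub, ha, hb]⟩

lemma range_csmul_mem (ι A : U →L[ℝ] V) (c d : ℂ) {x : V × V}
    (hx : x ∈ Set.range (cMinusA ι A c)) :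
    csmul d x ∈ Set.range (cMinusA ι A c) := by
  obtain ⟨a, ha⟩ := hx
  exact ⟨csmul d a, by rw [cMinusA_csmul, ha]⟩

lemma Ac_of_ker (ι A : U →L[ℝ] V) {ψ : U × U} (h : ψ ∈ kerIA ι A) :
    AcC A ψ = csmul Complex.I (iotaC ι ψ) := by
  have h' : csmul Complex.I (iotaC ι ψ) - AcC A ψ = 0 := h
  have := sub_eq_zero.mp h'
  exact this.symm

lemma Ac_conj_of_ker (ι A : U →L[ℝ] V) {ψ : U × U} (h : ψ ∈ kerIA ι A) :
    AcC A (conjC ψ) = csmul (-Complex.I) (conjC (iotaC ι ψ)) := by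
  rw [AcC_conjC, Ac_of_ker ι A h, conjC_csmul]
  simp

/-- `ι ψ⋆ ∈ ℛ(-i - A_c)`. -/
lemma iota_mem_ran_neg (ι A : U →L[ℝ] V) {ψ : U × U} (h : ψ ∈ kerIA ι A) :
    iotaC ι ψ ∈ Set.range (cMinusA ι A (-Complex.I)) := by
  refine ⟨csmul (Complex.I / 2) ψ, ?_⟩
  rw [cMinusA_csmul]
  have h1 : cMinusA ι A (-Complex.I) ψ = csmul (-(2 * Complex.I)) (iotaC ι ψ) := by
    unfold cMinusA
    rw [Ac_of_ker ι A h, csmul_sub_csmul]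
    norm_num
    ring_nf
  rw [h1, csmul_csmul']
  have : Complex.I / 2 * -(2 * Complex.I) = 1 := by
    linear_combination (-1 : ℂ) * Complex.I_mul_I
  rw [this, csmul_one']

/-- `conj (ι ψ⋆) ∈ ℛ(i - A_c)`. -/
lemma conj_iota_mem_ran_pos (ι A : U →L[ℝ] V) {ψ : U × U} (h : ψ ∈ kerIA ι A) :
    conjC (iotaC ι ψ) ∈ Set.range (cMinusA ι A Complex.I) := by
  refine ⟨csmul (-(Complex.I / 2)) (conjC ψ), ?_⟩
  rw [cMinusA_csmul]
  have h1 : cMinusA ι A Complex.I (conjC ψ)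
      = csmul (2 * Complex.I) (conjC (iotaC ι ψ)) := by
    unfold cMinusA
    rw [Ac_conj_of_ker ι A h, iotaC_conjC, csmul_sub_csmul]
    norm_num
    ring_nf
  rw [h1, csmul_csmul']
  have : -(Complex.I / 2) * (2 * Complex.I) = 1 := by
    linear_combination (-1 : ℂ) * Complex.I_mul_I
  rw [this, csmul_one']

/-- Separation: an element of `V⋆` lying in `V♯` is zero. -/
lemma star_inter_sharp (ι A : U →L[ℝ] V) (hH2 : H2hyp ι A)
    {ψ : U × U} (hψ : ψ ∈ kerIA ι A) (hψ0 : ψ ≠ 0) (c d : ℂ)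
    (h : csmul c (iotaC ι ψ) + csmul d (conjC (iotaC ι ψ)) ∈ Vsharp ι A) :
    csmul c (iotaC ι ψ) + csmul d (conjC (iotaC ι ψ)) = 0 := by
  have hnotin : iotaC ι ψ ∉ Set.range (cMinusA ι A Complex.I) :=
    hH2.2.2 ψ hψ hψ0
  -- c = 0
  have hc : c = 0 := by
    by_contra hc0
    have h1 : csmul c (iotaC ι ψ) ∈ Set.range (cMinusA ι A Complex.I) := by
      have := range_sub_mem ι A Complex.I h.1
        (range_csmul_mem ι A Complex.I d (conj_iota_mem_ran_pos ι A hψ))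
      simpa using this
    have : iotaC ι ψ ∈ Set.range (cMinusA ι A Complex.I) := by
      have h2 := range_csmul_mem ι A Complex.I c⁻¹ h1
      rwa [csmul_csmul', inv_mul_cancel₀ hc0, csmul_one'] at h2
    exact hnotin this
  -- d = 0
  have hd : d = 0 := by
    by_contra hd0
    have h1 : csmul d (conjC (iotaC ι ψ)) ∈ Set.range (cMinusA ι A (-Complex.I)) := by
      have := range_sub_mem ι A (-Complex.I) h.2
        (range_csmul_mem ι A (-Complex.I) c (iota_mem_ran_neg ι A hψ))
      simpa [add_sub_cancel_left] using this
    have h2 : conjC (iotaC ι ψ) ∈ Set.range (cMinusA ι A (-Complex.I)) := by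
      have h3 := range_csmul_mem ι A (-Complex.I) d⁻¹ h1
      rwa [csmul_csmul', inv_mul_cancel₀ hd0, csmul_one'] at h3
    obtain ⟨ξ, hξ⟩ := h2
    have h4 : iotaC ι ψ ∈ Set.range (cMinusA ι A Complex.I) := by
      refine ⟨conjC ξ, ?_⟩
      have := congrArg conjC hξ
      rw [conjC_cMinusA, conjC_conjC] at this
      simpa using this
    exact hnotin h4
  rw [hc, hd, csmul_zero', csmul_zero', add_zero]

end AuxProj2


/-- **Proposition 3.4 (ii).** Assume (H2) and let `P ∈ ℒ(V_c)` be the projection onto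
`V⋆ = span_ℂ{ψ⋆, conj ψ⋆}` along `V♯` given by the decomposition `V_c = V⋆ ⊕ V♯`.
Then `P A_c ⊆ A_c P`: if `φ ∈ 𝒟(A_c)` then `Pφ ∈ 𝒟(A_c)` and `P A_c φ = A_c P φ`
(so that `A_c = A⋆ ⊕ A♯` with respect to this splitting). -/
theorem projection_commutes_with_Ac
    {V : Type*} [NormedAddCommGroup V] [NormedSpace ℝ V] [CompleteSpace V]
    {U : Type*} [NormedAddCommGroup U] [NormedSpace ℝ U] [CompleteSpace U]
    (ι A : U →L[ℝ] V) (hι : Function.Injective ι)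
    (hUnorm : ∀ u : U, ‖u‖ = ‖A u‖) (hAbij : Function.Bijective A)
    (hH2 : H2hyp ι A)
    (ψs : U × U) (hψs : ψs ∈ kerIA ι A) (hψs0 : ψs ≠ 0)
    -- `P ∈ ℒ(V_c)` is complex-linear and projects onto `V⋆` along `V♯`:
    (P : (V × V) →L[ℝ] (V × V))
    (hPc : ∀ (c : ℂ) (x : V × V), P (csmul c x) = csmul c (P x))
    (hPstar : ∀ x : V × V, ∃ c d : ℂ,
      P x = csmul c (iotaC ι ψs) + csmul d (conjC (iotaC ι ψs)))
    (hPsharp : ∀ x : V × V, x - P x ∈ Vsharp ι A) :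
    ∀ φ : U × U, ∃ φ' : U × U,
      iotaC ι φ' = P (iotaC ι φ) ∧ P (AcC A φ) = AcC A φ' := by
  intro φ
  obtain ⟨c, d, hcd⟩ := hPstar (iotaC ι φ)
  set φs : U × U := csmul c ψs + csmul d (conjC ψs) with hφsdef
  have hιφs : iotaC ι φs = P (iotaC ι φ) := by
    rw [hcd, hφsdef, iotaC_add, iotaC_csmul, iotaC_csmul, iotaC_conjC]
  refine ⟨φs, hιφs, ?_⟩
  -- `P` fixes elements of `V⋆`
  have hfix : ∀ a b : ℂ,
      P (csmul a (iotaC ι ψs) + csmul b (conjC (iotaC ι ψs)))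
        = csmul a (iotaC ι ψs) + csmul b (conjC (iotaC ι ψs)) := by
    intro a b
    set x := csmul a (iotaC ι ψs) + csmul b (conjC (iotaC ι ψs)) with hx
    obtain ⟨a', b', hab⟩ := hPstar x
    have hsh := hPsharp x
    have key : x - P x
        = csmul (a - a') (iotaC ι ψs) + csmul (b - b') (conjC (iotaC ι ψs)) := by
      rw [hab, hx, ← csmul_sub_csmul, ← csmul_sub_csmul]
      abel
    rw [key] at hsh
    have hz := star_inter_sharp ι A hH2 hψs hψs0 (a - a') (b - b') hsh
    have : x - P x = 0 := key.trans hz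
    rw [sub_eq_zero] at this
    exact this.symm
  -- the sharp part
  set χ : U × U := φ - φs with hχdef
  have hχ : iotaC ι χ = iotaC ι φ - P (iotaC ι φ) := by
    rw [hχdef, iotaC_sub, hιφs]
  have hχsharp : iotaC ι χ ∈ Vsharp ι A := by
    rw [hχ]; exact hPsharp (iotaC ι φ)
  -- `A_c χ ∈ V♯`
  have hAχ : AcC A χ ∈ Vsharp ι A := by
    obtain ⟨ξ, hξ⟩ := hχsharp.1
    obtain ⟨η, hη⟩ := hχsharp.2
    constructor
    · refine ⟨csmul Complex.I ξ - χ, ?_⟩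
      rw [cMinusA_sub, cMinusA_csmul, hξ]
      show csmul Complex.I (iotaC ι χ) - (csmul Complex.I (iotaC ι χ) - AcC A χ)
          = AcC A χ
      abel
    · refine ⟨csmul (-Complex.I) η - χ, ?_⟩
      rw [cMinusA_sub, cMinusA_csmul, hη]
      show csmul (-Complex.I) (iotaC ι χ)
          - (csmul (-Complex.I) (iotaC ι χ) - AcC A χ) = AcC A χ
      abel
  -- `P (A_c χ) = 0`
  have hPAχ : P (AcC A χ) = 0 := by
    obtain ⟨a, b, hab⟩ := hPstar (AcC A χ)
    have hsh := hPsharp (AcC A χ)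
    have hmem : P (AcC A χ) ∈ Vsharp ι A := by
      have h1 : AcC A χ - (AcC A χ - P (AcC A χ)) ∈ Vsharp ι A :=
        ⟨range_sub_mem ι A _ hAχ.1 hsh.1, range_sub_mem ι A _ hAχ.2 hsh.2⟩
      simpa [sub_sub_cancel] using h1
    rw [hab] at hmem
    have hz := star_inter_sharp ι A hH2 hψs hψs0 a b hmem
    exact hab.trans hz
  -- conclude
  have hAφ : AcC A φ = AcC A φs + AcC A χ := by
    rw [← AcC_add]
    congr 1
    rw [hχdef]; abel
  have hAφs : AcC A φs
      = csmul (c * Complex.I) (iotaC ι ψs)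
        + csmul (d * -Complex.I) (conjC (iotaC ι ψs)) := by
    rw [hφsdef, AcC_add, AcC_csmul, AcC_csmul, Ac_of_ker ι A hψs,
      Ac_conj_of_ker ι A hψs, csmul_csmul', csmul_csmul']
  rw [hAφ, map_add, hPAχ, add_zero, hAφs, hfix]

end HopfStmt
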